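/- For integers c_1, …, c_l with c_l > 2 and any integer h ≥ 0, one has q^h·(E^♯_{l+1}(c_1,…,c_l,2)_q − E^♯_l(c_1,…,c_l)_q) = E^♯_{l+h+1}(c_1,…,c_l,2^{(h+1)})_q − E^♯_{l+h}(c_1,…,c_l,2^{(h)})_q, where 2^{(j)} denotes j consecutive entries equal to 2. -/

import Mathlib

noncomputable section

/-- The field ℚ(q) of rational functions over ℚ. -/
abbrev K : Type := RatFunc ℚ

/-- The variable q. -/
def q : K := RatFunc.X

/-- Right q-integer `[n]^♯` with deformation parameter `x`. -/
def qsX (x : K) (n : ℤ) : K := (1 - x ^ n) / (1 - x)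

/-- Left q-integer `[n]^♭` with deformation parameter `x`. -/
def qfX (x : K) (n : ℤ) : K := (1 - x ^ (n - 1) + x ^ n - x ^ (n + 1)) / (1 - x)

/-- Right q-integer `[n]^♯_q`. -/
def qs (n : ℤ) : K := qsX q n

/-- Left q-integer `[n]^♭_q`. -/
def qf (n : ℤ) : K := qfX q n

/-- Right q-deformed Euler continuant `E^♯` (first-row expansion of the
tridiagonal determinant), with parameter `x`. -/
def EsharpX (x : K) : List ℤ → K
  | [] => 1
  | [c] => qsX x c
  | c :: d :: rest => qsX x c * EsharpX x (d :: rest) - x ^ (c - 1) * EsharpX x rest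

/-- Left q-deformed Euler continuant `E^♭` (first-row expansion of the
tridiagonal determinant whose (k,k) entry is the left q-integer), with parameter `x`. -/
def EflatX (x : K) : List ℤ → K
  | [] => 1
  | [c] => qfX x c
  | c :: d :: rest => qsX x c * EflatX x (d :: rest) - x ^ (c - 1) * EflatX x rest

def Esharp (L : List ℤ) : K := EsharpX q L

def Eflat (L : List ℤ) : K := EflatX q L

/-- `E^♯_{j-1}(d_2,…,d_j)` for the input list `(d_1,…,d_j)`, with the
convention `E^♯_{-1}() = 0` when the list is empty. -/
def EsharpD : List ℤ → K
  | [] => 0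
  | _ :: rest => Esharp rest

/-- `E^♭_{j-1}(d_2,…,d_j)` for the input list `(d_1,…,d_j)`, with the
convention `E^♭_{-1}() = 1 - q` when the list is empty. -/
def EflatD : List ℤ → K
  | [] => 1 - q
  | _ :: rest => Eflat rest

/-- Left q-deformed negative continued fraction `[[c_1,…,c_k]]^♭_q`. -/
def nflat : List ℤ → K
  | [] => 0
  | [c] => qf c
  | c :: d :: rest => qs c - q ^ (c - 1) / nflat (d :: rest)

/-- Right q-deformed negative continued fraction `[[c_1,…,c_k]]^♯_q`. -/
def nsharp : List ℤ → K
  | [] => 0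
  | [c] => qs c
  | c :: d :: rest => qs c - q ^ (c - 1) / nsharp (d :: rest)

/-- Left q-deformed regular continued fraction, with alternating parameter `x`, `x⁻¹`. -/
def regFlatX : K → List ℤ → K
  | _, [] => 0
  | x, [a] => qfX x a
  | x, a :: d :: rest => qsX x a + x ^ a / regFlatX x⁻¹ (d :: rest)

/-- Left q-deformed regular continued fraction `[a_1,…,a_{2m}]^♭_q`. -/
def regFlat (L : List ℤ) : K := regFlatX q L

/-- Classical negative continued fraction `[[c_1,…,c_k]] ∈ ℚ`. -/
def negCF : List ℤ → ℚ
  | [] => 0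
  | [c] => c
  | c :: d :: rest => c - 1 / negCF (d :: rest)

/-- Classical regular continued fraction `[a_1,…,a_{2m}] ∈ ℚ`. -/
def regCF : List ℤ → ℚ
  | [] => 0
  | [a] => a
  | a :: d :: rest => a + 1 / regCF (d :: rest)

/-- The matrix σ_{1,q} as an invertible 2×2 matrix over ℚ(q). -/
def σ1 : (Matrix (Fin 2) (Fin 2) K)ˣ where
  val := !![q⁻¹, -q⁻¹; 0, 1]
  inv := !![q, 1; 0, 1]
  val_inv := by
    have hq : (q : K) ≠ 0 := RatFunc.X_ne_zero
    ext i j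
    fin_cases i <;> fin_cases j <;>
      simp [Matrix.mul_apply, Fin.sum_univ_two, inv_mul_cancel₀ hq]
  inv_val := by
    have hq : (q : K) ≠ 0 := RatFunc.X_ne_zero
    ext i j
    fin_cases i <;> fin_cases j <;>
      simp [Matrix.mul_apply, Fin.sum_univ_two, mul_inv_cancel₀ hq]

/-- The matrix σ_{2,q} as an invertible 2×2 matrix over ℚ(q). -/
def σ2 : (Matrix (Fin 2) (Fin 2) K)ˣ where
  val := !![1, 0; 1, q⁻¹]
  inv := !![1, 0; -q, q]
  val_inv := by
    have hq : (q : K) ≠ 0 := RatFunc.X_ne_zero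
    ext i j
    fin_cases i <;> fin_cases j <;>
      simp [Matrix.mul_apply, Fin.sum_univ_two, inv_mul_cancel₀ hq]
  inv_val := by
    have hq : (q : K) ≠ 0 := RatFunc.X_ne_zero
    ext i j
    fin_cases i <;> fin_cases j <;>
      simp [Matrix.mul_apply, Fin.sum_univ_two, mul_inv_cancel₀ hq]

/-- The matrix S_q as an invertible 2×2 matrix over ℚ(q). -/
def Sq : (Matrix (Fin 2) (Fin 2) K)ˣ where
  val := !![0, -q⁻¹; 1, 0]
  inv := !![0, 1; -q, 0]
  val_inv := by
    have hq : (q : K) ≠ 0 := RatFunc.X_ne_zero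
    ext i j
    fin_cases i <;> fin_cases j <;>
      simp [Matrix.mul_apply, Fin.sum_univ_two, inv_mul_cancel₀ hq]
  inv_val := by
    have hq : (q : K) ≠ 0 := RatFunc.X_ne_zero
    ext i j
    fin_cases i <;> fin_cases j <;>
      simp [Matrix.mul_apply, Fin.sum_univ_two, mul_inv_cancel₀ hq]

/-- The product σ_{1,q}^{-c_1}·S_q·σ_{1,q}^{-c_2}·S_q⋯σ_{1,q}^{-c_k}·S_q. -/
def prodCS : List ℤ → (Matrix (Fin 2) (Fin 2) K)ˣ
  | [] => 1
  | c :: rest => σ1 ^ (-c) * Sq * prodCS rest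

/-- The product σ_{1,q}^{-a_1}·σ_{2,q}^{a_2}⋯σ_{1,q}^{-a_{2m-1}}·σ_{2,q}^{a_{2m}}. -/
def prodReg : List ℤ → (Matrix (Fin 2) (Fin 2) K)ˣ
  | [] => 1
  | [a] => σ1 ^ (-a)
  | a :: b :: rest => σ1 ^ (-a) * σ2 ^ b * prodReg rest

/-- The sum a_2 + a_4 + ⋯ of the even-indexed entries. -/
def evenSum : List ℤ → ℤ
  | [] => 0
  | [_] => 0
  | _ :: b :: rest => b + evenSum rest

/-- Möbius action of a 2×2 matrix on ℚ(q). -/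
def mobius (A : Matrix (Fin 2) (Fin 2) K) (x : K) : K :=
  (A 0 0 * x + A 0 1) / (A 1 0 * x + A 1 1)

/-- Last-column expansion of the right q-deformed continuant. -/
theorem EsharpX_lastExp (x : K) : ∀ (L : List ℤ) (d c : ℤ),
    EsharpX x (L ++ [d, c])
      = qsX x c * EsharpX x (L ++ [d]) - x ^ (d - 1) * EsharpX x L
  | [], d, c => by simp [EsharpX]; ring
  | [a], d, c => by simp [EsharpX]; ring
  | a :: b :: L, d, c => by
    have h1 := EsharpX_lastExp x (b :: L) d c
    have h2 := EsharpX_lastExp x L d c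
    simp only [List.cons_append, List.append_eq, EsharpX] at h1 h2 ⊢
    rw [h1, h2]; ring

theorem one_sub_q_ne_zero : (1 : K) - q ≠ 0 := by
  intro h
  have hq : (q : K) = 1 := by linear_combination -h
  have : (RatFunc.X : K) = algebraMap (Polynomial ℚ) K 1 := by simpa [q] using hq
  rw [← RatFunc.algebraMap_X] at this
  have h2 : (Polynomial.X : Polynomial ℚ) = 1 :=
    IsFractionRing.injective (Polynomial ℚ) K this
  simpa using Polynomial.X_ne_C (1 : ℚ) (by simpa using h2)

theorem qs_two : qs 2 = 1 + q := by
  have h1 : (1 : K) - q ≠ 0 := one_sub_q_ne_zero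
  rw [qs, qsX, div_eq_iff h1, show ((2:ℤ)) = ((2:ℕ):ℤ) from rfl, zpow_natCast]
  ring

/-- q^h·(E^♯_{l+1}(c_1,…,c_l,2) − E^♯_l(c_1,…,c_l))
    = E^♯_{l+h+1}(c_1,…,c_l,2^{(h+1)}) − E^♯_{l+h}(c_1,…,c_l,2^{(h)}). -/
theorem Esharp_two_pow (cs : List ℤ) (cl : ℤ) (hcl : 2 < cl) (h : ℕ) :
    q ^ (h : ℤ) * (Esharp ((cs ++ [cl]) ++ [2]) - Esharp (cs ++ [cl]))
      = Esharp ((cs ++ [cl]) ++ List.replicate (h + 1) 2)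
        - Esharp ((cs ++ [cl]) ++ List.replicate h 2) := by
  induction h with
  | zero => simp
  | succ h ih =>
    have e1 : (cs ++ [cl]) ++ List.replicate (h + 2) (2 : ℤ)
        = ((cs ++ [cl]) ++ List.replicate h (2 : ℤ)) ++ [2, 2] := by
      rw [List.append_assoc, List.replicate_add]; simp
    have e2 : (cs ++ [cl]) ++ List.replicate (h + 1) (2 : ℤ)
        = ((cs ++ [cl]) ++ List.replicate h (2 : ℤ)) ++ [2] := by
      rw [List.append_assoc, List.replicate_add]; simp
    have key : Esharp ((cs ++ [cl]) ++ List.replicate (h + 2) (2 : ℤ))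
        = qs 2 * Esharp ((cs ++ [cl]) ++ List.replicate (h + 1) 2)
          - q * Esharp ((cs ++ [cl]) ++ List.replicate h 2) := by
      rw [e1, e2]
      have := EsharpX_lastExp q ((cs ++ [cl]) ++ List.replicate h (2 : ℤ)) 2 2
      simpa [Esharp, qs] using this
    have hrep1 : List.replicate (h + 1 + 1) (2 : ℤ) = List.replicate (h + 2) 2 := rfl
    rw [hrep1, key, qs_two]
    push_cast
    have hq0 : q ≠ 0 := by unfold q; exact RatFunc.X_ne_zero
    rw [zpow_add₀ hq0 (h : ℤ) 1]
    rw [zpow_one]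
    linear_combination q * ih
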